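/- Let K and K' be complex Hilbert spaces, let Q₀ be a positive contraction on K (Q₀ = Q₀*, 0 ≤ Q₀, ‖Q₀‖ ≤ 1), and let D : K' → K be a unitary operator. Define the bounded operator W on K × K' by W(x, y) = ( 2Q₀x + Q₀^{1/2}(I − Q₀)^{1/2} D y , D*( Q₀^{1/2}(I − Q₀)^{1/2} x ) ). Then σ(W) = σ(Q₀ + Q₀^{1/2}) ∪ σ(Q₀ − Q₀^{1/2}), i.e. σ(W) = { λ + √λ : λ ∈ σ(Q₀) } ∪ { λ − √λ : λ ∈ σ(Q₀) }. -/

import Mathlib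

set_option synthInstance.maxHeartbeats 400000
set_option maxHeartbeats 1000000

section Blk
open ContinuousLinearMap
variable {𝕜 X Y : Type*} [NontriviallyNormedField 𝕜] [NormedAddCommGroup X] [NormedSpace 𝕜 X]
  [NormedAddCommGroup Y] [NormedSpace 𝕜 Y]

noncomputable def blk (A : X →L[𝕜] X) (B : Y →L[𝕜] X) (C : X →L[𝕜] Y) (E : Y →L[𝕜] Y) :
    (X × Y) →L[𝕜] X × Y :=
  ((A ∘L fst 𝕜 X Y) + (B ∘L snd 𝕜 X Y)).prod ((C ∘L fst 𝕜 X Y) + (E ∘L snd 𝕜 X Y))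

@[simp] lemma blk_apply (A : X →L[𝕜] X) (B : Y →L[𝕜] X) (C : X →L[𝕜] Y) (E : Y →L[𝕜] Y)
    (v : X × Y) : blk A B C E v = (A v.1 + B v.2, C v.1 + E v.2) := rfl

lemma blk_comp_blk (A : X →L[𝕜] X) (B : Y →L[𝕜] X) (C : X →L[𝕜] Y) (E : Y →L[𝕜] Y)
    (A' : X →L[𝕜] X) (B' : Y →L[𝕜] X) (C' : X →L[𝕜] Y) (E' : Y →L[𝕜] Y) :
    blk A B C E ∘L blk A' B' C' E' =
      blk (A ∘L A' + B ∘L C') (A ∘L B' + B ∘L E') (C ∘L A' + E ∘L C') (C ∘L B' + E ∘L E') := by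
  ext v <;> simp [Prod.ext_iff, map_add]

lemma blk_one : blk (1 : X →L[𝕜] X) 0 0 (1 : Y →L[𝕜] Y) = 1 := by
  ext v <;> simp

lemma blk_injective {A A' : X →L[𝕜] X} {B B' : Y →L[𝕜] X} {C C' : X →L[𝕜] Y} {E E' : Y →L[𝕜] Y}
    (h : blk A B C E = blk A' B' C' E') : A = A' ∧ B = B' ∧ C = C' ∧ E = E' := by
  refine ⟨?_, ?_, ?_, ?_⟩ <;> ext x
  · simpa using congrArg Prod.fst (DFunLike.congr_fun h (x, 0))
  · simpa using congrArg Prod.fst (DFunLike.congr_fun h (0, x))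
  · simpa using congrArg Prod.snd (DFunLike.congr_fun h (x, 0))
  · simpa using congrArg Prod.snd (DFunLike.congr_fun h (0, x))

lemma isUnit_conj_of (e : X ≃L[𝕜] Y) (T : Y →L[𝕜] Y) (h : IsUnit T) :
    IsUnit ((e.symm : Y →L[𝕜] X) ∘L T ∘L (e : X →L[𝕜] Y)) := by
  obtain ⟨u, rfl⟩ := h
  have h1 : ∀ w, (↑u : Y →L[𝕜] Y) ((↑u⁻¹ : Y →L[𝕜] Y) w) = w := fun w => by
    rw [← comp_apply, ← ContinuousLinearMap.mul_def, u.mul_inv]; rfl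
  have h2 : ∀ w, (↑u⁻¹ : Y →L[𝕜] Y) ((↑u : Y →L[𝕜] Y) w) = w := fun w => by
    rw [← comp_apply, ← ContinuousLinearMap.mul_def, u.inv_mul]; rfl
  refine ⟨⟨_, (e.symm : Y →L[𝕜] X) ∘L (↑u⁻¹ : Y →L[𝕜] Y) ∘L (e : X →L[𝕜] Y), ?_, ?_⟩, rfl⟩ <;>
  · ext x
    simp [ContinuousLinearMap.mul_def, h1, h2]

lemma isUnit_conj_iff (e : X ≃L[𝕜] Y) (T : Y →L[𝕜] Y) :
    IsUnit ((e.symm : Y →L[𝕜] X) ∘L T ∘L (e : X →L[𝕜] Y)) ↔ IsUnit T := by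
  refine ⟨fun h => ?_, isUnit_conj_of e T⟩
  have := isUnit_conj_of e.symm _ h
  have heq : (↑e : X →L[𝕜] Y) ∘L ((e.symm : Y →L[𝕜] X) ∘L T ∘L (e : X →L[𝕜] Y)) ∘L
      (↑e.symm : Y →L[𝕜] X) = T := by
    ext x; simp
  rwa [ContinuousLinearEquiv.symm_symm, heq] at this

lemma spectrum_conj (e : X ≃L[𝕜] Y) (T : Y →L[𝕜] Y) :
    spectrum 𝕜 ((e.symm : Y →L[𝕜] X) ∘L T ∘L (e : X →L[𝕜] Y)) = spectrum 𝕜 T := by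
  ext z
  simp only [spectrum.mem_iff, not_iff_not]
  have : algebraMap 𝕜 (X →L[𝕜] X) z - (e.symm : Y →L[𝕜] X) ∘L T ∘L (e : X →L[𝕜] Y) =
      (e.symm : Y →L[𝕜] X) ∘L (algebraMap 𝕜 (Y →L[𝕜] Y) z - T) ∘L (e : X →L[𝕜] Y) := by
    ext x
    simp [Algebra.algebraMap_eq_smul_one]
  rw [this, isUnit_conj_iff]

end Blk

section RingLemmas
variable {A : Type*} [Ring A]

lemma key_ring (a q r : A) (ha : ∀ x : A, Commute a x) (hrq : Commute r q) (hr2 : r * r = q) :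
    (a - q - r) * (a - q + r) = a*a - a*q - a*q + q*q - q := by
  have hxr : Commute (a - q) r := (ha r).sub_left hrq.symm
  calc (a-q-r)*(a-q+r) = (a-q)*(a-q) + (a-q)*r - r*(a-q) - r*r := by
        rw [sub_mul, mul_add, mul_add]; abel
  _ = (a-q)*(a-q) - q := by rw [hxr.eq, hr2]; abel
  _ = a*a - a*q - a*q + q*q - q := by rw [sub_mul, mul_sub, mul_sub, ← (ha q).eq]; abel

lemma blockIdents (a q cc P Pi : A) (ha : ∀ x : A, Commute a x) (hq : Commute q cc)
    (hcc : cc * cc = q - q*q) (hP : P = a*a - a*q - a*q + q*q - q)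
    (hPPi : P * Pi = 1) (hPiP : Pi * P = 1) :
    ((a - (q+q)) * (Pi * a) - cc * (Pi * cc) = 1) ∧
    ((a - (q+q)) * (Pi * cc) - cc * (Pi * (a - (q+q))) = 0) ∧
    (a * (Pi * cc) - cc * (Pi * a) = 0) ∧
    (a * (Pi * (a - (q+q))) - cc * (Pi * cc) = 1) ∧
    ((Pi * a) * (a - (q+q)) - (Pi * cc) * cc = 1) ∧
    (-((Pi * a) * cc) + (Pi * cc) * a = 0) ∧
    ((Pi * cc) * (a - (q+q)) - (Pi * (a - (q+q))) * cc = 0) ∧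
    (-((Pi * cc) * cc) + (Pi * (a - (q+q))) * a = 1) := by
  have key : ∀ x : A, Commute x P → Commute x Pi := fun x hx => by
    have : Pi * x = x * Pi := by
      calc Pi * x = Pi * x * (P * Pi) := by rw [hPPi, mul_one]
      _ = Pi * (x * P) * Pi := by rw [mul_assoc, ← mul_assoc x P Pi, ← mul_assoc]
      _ = Pi * (P * x) * Pi := by rw [hx.eq]
      _ = (Pi * P) * (x * Pi) := by rw [← mul_assoc, ← mul_assoc, mul_assoc (Pi * P)]
      _ = x * Pi := by rw [hPiP, one_mul]
    exact this.symm
  have hqP : Commute q P := by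
    rw [hP]
    exact (((((ha q).symm.mul_right (ha q).symm).sub_right
      ((ha q).symm.mul_right (Commute.refl q))).sub_right
      ((ha q).symm.mul_right (Commute.refl q))).add_right
      ((Commute.refl q).mul_right (Commute.refl q))).sub_right (Commute.refl q)
  have hccP : Commute cc P := by
    rw [hP]
    exact (((((ha cc).symm.mul_right (ha cc).symm).sub_right
      ((ha cc).symm.mul_right hq.symm)).sub_right
      ((ha cc).symm.mul_right hq.symm)).add_right
      (hq.symm.mul_right hq.symm)).sub_right hq.symm
  have hPiq : Commute q Pi := key q hqP
  have hPicc : Commute cc Pi := key cc hccP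
  have hαPi : Commute (a - (q+q)) Pi := (ha Pi).sub_left (hPiq.add_left hPiq)
  have hαcc : Commute (a - (q+q)) cc := (ha cc).sub_left (hq.add_left hq)
  have hmv : ∀ x y : A, Commute x Pi → x * (Pi * y) = Pi * (x * y) := fun x y h => by
    rw [← mul_assoc, h.eq, mul_assoc]
  have detA : a * (a - (q+q)) - cc*cc = P := by rw [hP, hcc, mul_sub, mul_add]; abel
  have detB : (a - (q+q)) * a - cc*cc = P := by
    rw [hP, hcc, sub_mul, add_mul, ← (ha q).eq]; abel
  refine ⟨?_, ?_, ?_, ?_, ?_, ?_, ?_, ?_⟩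
  · rw [hmv _ _ hαPi, hmv _ _ hPicc, ← mul_sub, detB, hPiP]
  · rw [hmv _ _ hαPi, hmv _ _ hPicc, ← mul_sub, hαcc.eq, sub_self, mul_zero]
  · rw [hmv _ _ (ha Pi), hmv _ _ hPicc, ← mul_sub, (ha cc).eq, sub_self, mul_zero]
  · rw [hmv _ _ (ha Pi), hmv _ _ hPicc, ← mul_sub, detA, hPiP]
  · rw [mul_assoc, mul_assoc, ← mul_sub, detA, hPiP]
  · rw [mul_assoc, mul_assoc, neg_add_eq_sub, ← mul_sub, (ha cc).eq, sub_self, mul_zero]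
  · rw [mul_assoc, mul_assoc, ← mul_sub, ← hαcc.eq, sub_self, mul_zero]
  · rw [mul_assoc, mul_assoc, neg_add_eq_sub, ← mul_sub, detB, hPiP]

end RingLemmas

open ContinuousLinearMap in
/-- For a positive contraction `Q₀` on `K`, a unitary `D : K' → K`, and the block operator
`W(x, y) = (2Q₀x + Q₀^{1/2}(I - Q₀)^{1/2}Dy, D*(Q₀^{1/2}(I - Q₀)^{1/2}x))` on `K × K'`,
`σ(W) = σ(Q₀ + Q₀^{1/2}) ∪ σ(Q₀ - Q₀^{1/2}) = {λ ± √λ : λ ∈ σ(Q₀)}`. -/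
theorem spectrum_blockW
    {K K' : Type*} [NormedAddCommGroup K] [InnerProductSpace ℂ K] [CompleteSpace K]
    [NormedAddCommGroup K'] [InnerProductSpace ℂ K'] [CompleteSpace K']
    (Q₀ : K →L[ℂ] K) (hsa : IsSelfAdjoint Q₀) (hpos : 0 ≤ Q₀) (hc : ‖Q₀‖ ≤ 1)
    (D : K' →L[ℂ] K) (hD1 : adjoint D ∘L D = ContinuousLinearMap.id ℂ K')
    (hD2 : D ∘L adjoint D = ContinuousLinearMap.id ℂ K)
    (W : WithLp 2 (K × K') →L[ℂ] WithLp 2 (K × K'))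
    (hW : ∀ (x : K) (y : K'),
      W ((WithLp.equiv 2 (K × K')).symm (x, y)) =
        (WithLp.equiv 2 (K × K')).symm
          ((2 : ℂ) • Q₀ x + (CFC.sqrt Q₀) ((CFC.sqrt (1 - Q₀)) (D y)),
           adjoint D ((CFC.sqrt Q₀) ((CFC.sqrt (1 - Q₀)) x)))) :
    spectrum ℂ W = spectrum ℂ (Q₀ + CFC.sqrt Q₀) ∪ spectrum ℂ (Q₀ - CFC.sqrt Q₀) ∧
    spectrum ℂ W =
      {z : ℂ | ∃ l : ℝ, (l : ℂ) ∈ spectrum ℂ Q₀ ∧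
        (z = ((l + Real.sqrt l : ℝ) : ℂ) ∨ z = ((l - Real.sqrt l : ℝ) : ℂ))} := by
  set D' := adjoint D with hD'
  -- basic positivity facts
  have h1 : (0 : K →L[ℂ] K) ≤ 1 - Q₀ := by
    have halg : ∀ s : ℝ, 0 ≤ s → 0 ≤ algebraMap ℝ (K →L[ℂ] K) s := fun s hs => by
      have h := star_mul_self_nonneg (Real.sqrt s • (1 : K →L[ℂ] K))
      rwa [star_smul, star_one, star_trivial, smul_mul_smul_comm, one_mul,
        Real.mul_self_sqrt hs, ← Algebra.algebraMap_eq_smul_one] at h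
    have h2 : Q₀ ≤ algebraMap ℝ _ ‖Q₀‖ := hsa.le_algebraMap_norm_self
    have h3 : algebraMap ℝ (K →L[ℂ] K) ‖Q₀‖ ≤ 1 := by
      have := halg (1 - ‖Q₀‖) (by linarith)
      rw [map_sub, map_one, sub_nonneg] at this
      exact this
    rw [sub_nonneg]; exact h2.trans h3
  set R := CFC.sqrt Q₀ with hRdef
  set S := CFC.sqrt (1 - Q₀) with hSdef
  have hRcfc : R = cfc Real.sqrt Q₀ := by
    rw [hRdef, CFC.sqrt_eq_cfc, cfc_nnreal_eq_real (ha := hpos)]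
    exact cfc_congr fun x _ => by rw [Real.sqrt]
  have hsub_cfc : (1 : K →L[ℂ] K) - Q₀ = cfc (fun x : ℝ => 1 - x) Q₀ := by
    rw [cfc_sub _ _ Q₀, cfc_const _ Q₀, cfc_id' ℝ Q₀, map_one]
  have hScfc : S = cfc (fun x : ℝ => Real.sqrt (1 - x)) Q₀ := by
    have h3 : CFC.sqrt (1 - Q₀) = cfc Real.sqrt (1 - Q₀) := by
      rw [CFC.sqrt_eq_cfc, cfc_nnreal_eq_real (ha := h1)]
      exact cfc_congr fun x _ => by rw [Real.sqrt]
    rw [hSdef, h3, hsub_cfc, ← cfc_comp' Real.sqrt (fun x : ℝ => 1 - x) Q₀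
      (by exact Real.continuous_sqrt.continuousOn)]
  have hR2 : R * R = Q₀ := CFC.sqrt_mul_sqrt_self Q₀ hpos
  have hS2 : S * S = 1 - Q₀ := CFC.sqrt_mul_sqrt_self _ h1
  have hRS : Commute R S := by rw [hRcfc, hScfc]; exact cfc_commute_cfc _ _ Q₀
  have hRQ : Commute R Q₀ := by
    rw [← hR2]; exact (Commute.refl R).mul_right (Commute.refl R)
  have hSQ : Commute S Q₀ := by
    have h4 : Commute S (1 - Q₀) := by
      rw [← hS2]; exact (Commute.refl S).mul_right (Commute.refl S)
    have := (Commute.one_right S).sub_right h4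
    rwa [sub_sub_cancel] at this
  set Cc := R * S with hCcdef
  have hCc2 : Cc * Cc = Q₀ - Q₀ * Q₀ := by
    rw [hCcdef]
    calc R * S * (R * S) = R * (S * R) * S := by rw [mul_assoc, mul_assoc, mul_assoc]
    _ = R * (R * S) * S := by rw [hRS.eq]
    _ = (R * R) * (S * S) := by rw [mul_assoc, mul_assoc, mul_assoc]
    _ = Q₀ * (1 - Q₀) := by rw [hR2, hS2]
    _ = Q₀ - Q₀ * Q₀ := by rw [mul_sub, mul_one]
  have hCcQ : Commute Cc Q₀ := hRQ.mul_left hSQ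
  -- pointwise unitarity
  have hD1' : ∀ w, D' (D w) = w := fun w => by
    have := DFunLike.congr_fun hD1 w; simpa using this
  have hD2' : ∀ w, D (D' w) = w := fun w => by
    have := DFunLike.congr_fun hD2 w; simpa using this
  -- the block operator on the plain product
  set f : (K × K') →L[ℂ] (K × K') := blk (Q₀ + Q₀) (Cc ∘L D) (D' ∘L Cc) 0 with hfdef
  set E := WithLp.prodContinuousLinearEquiv 2 ℂ K K' with hEdef
  have hWE : W = (E.symm : (K × K') →L[ℂ] WithLp 2 (K × K')) ∘L f ∘L
      (E : WithLp 2 (K × K') →L[ℂ] (K × K')) := by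
    ext v
    have h := hW (E v).1 (E v).2
    have hv : (WithLp.equiv 2 (K × K')).symm ((E v).1, (E v).2) = v := rfl
    rw [hv] at h
    rw [h]
    simp [hfdef, hEdef, two_smul, hCcdef, ContinuousLinearMap.mul_apply, mul_apply']
  have hsWf : spectrum ℂ W = spectrum ℂ f := by rw [hWE]; exact spectrum_conj E f
  -- the key unit equivalence
  have hunit : ∀ z : ℂ,
      (IsUnit (algebraMap ℂ ((K × K') →L[ℂ] K × K') z - f) ↔
        IsUnit (algebraMap ℂ (K →L[ℂ] K) z - (Q₀ + R)) ∧
        IsUnit (algebraMap ℂ (K →L[ℂ] K) z - (Q₀ - R))) := by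
    intro z
    set a : K →L[ℂ] K := algebraMap ℂ (K →L[ℂ] K) z with hadef
    set a' : K' →L[ℂ] K' := algebraMap ℂ (K' →L[ℂ] K') z with ha'def
    have ha : ∀ x : K →L[ℂ] K, Commute a x := fun x => Algebra.commutes z x
    have haapp : ∀ w : K, a w = z • w := fun w => by
      rw [hadef, Algebra.algebraMap_eq_smul_one]; simp
    have ha'app : ∀ w : K', a' w = z • w := fun w => by
      rw [ha'def, Algebra.algebraMap_eq_smul_one]; simp
    set P : K →L[ℂ] K := a * a - a * Q₀ - a * Q₀ + Q₀ * Q₀ - Q₀ with hPdef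
    have detA : a * (a - (Q₀ + Q₀)) - Cc * Cc = P := by
      rw [hPdef, hCc2, mul_sub, mul_add]; abel
    have detB : (a - (Q₀ + Q₀)) * a - Cc * Cc = P := by
      rw [hPdef, hCc2, sub_mul, add_mul, ← (ha Q₀).eq]; abel
    have hX : a - (Q₀ + R) = a - Q₀ - R := sub_add_eq_sub_sub a Q₀ R
    have hY : a - (Q₀ - R) = a - Q₀ + R := by abel
    have hXY : (a - (Q₀ + R)) * (a - (Q₀ - R)) = P := by
      rw [hX, hY, key_ring a Q₀ R ha hRQ hR2, hPdef]
    have hCommXY : Commute (a - (Q₀ + R)) (a - (Q₀ - R)) := by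
      rw [hX, hY]
      have hw : Commute (a - Q₀) R := (ha R).sub_left hRQ.symm
      exact ((Commute.refl (a - Q₀)).sub_left hw.symm).add_right
        (hw.sub_left (Commute.refl R))
    have hVblk : algebraMap ℂ ((K × K') →L[ℂ] K × K') z - f =
        blk (a - (Q₀ + Q₀)) (-(Cc ∘L D)) (-(D' ∘L Cc)) a' := by
      ext v <;>
        simp [hfdef, hadef, ha'def, Algebra.algebraMap_eq_smul_one, sub_eq_add_neg] <;> abel
    have dir1 : IsUnit P → IsUnit (algebraMap ℂ ((K × K') →L[ℂ] K × K') z - f) := by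
      intro hP
      set Pi : K →L[ℂ] K := ↑hP.unit⁻¹ with hPidef
      have hPPi : P * Pi = 1 := hP.mul_val_inv
      have hPiP : Pi * P = 1 := hP.val_inv_mul
      obtain ⟨I1, I2, I3, I4, J1, J2, J3, J4⟩ :=
        blockIdents a Q₀ Cc P Pi ha hCcQ.symm hCc2 hPdef hPPi hPiP
      refine ⟨⟨algebraMap ℂ ((K × K') →L[ℂ] K × K') z - f,
        blk (Pi * a) ((Pi * Cc) ∘L D) (D' ∘L (Pi * Cc))
          (D' ∘L ((Pi * (a - (Q₀ + Q₀))) ∘L D)), ?_, ?_⟩, rfl⟩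
      · rw [ContinuousLinearMap.mul_def, hVblk, blk_comp_blk]
        have e11 : (a - (Q₀ + Q₀)) ∘L (Pi * a) + (-(Cc ∘L D)) ∘L (D' ∘L (Pi * Cc)) = 1 := by
          have hB : (-(Cc ∘L D)) ∘L (D' ∘L (Pi * Cc)) = -(Cc * (Pi * Cc)) := by
            ext x; simp [ContinuousLinearMap.mul_apply, hD2']
          rw [hB, ← sub_eq_add_neg]; exact I1
        have e12 : (a - (Q₀ + Q₀)) ∘L ((Pi * Cc) ∘L D) +
            (-(Cc ∘L D)) ∘L (D' ∘L ((Pi * (a - (Q₀ + Q₀))) ∘L D)) = 0 := by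
          have hA : (a - (Q₀ + Q₀)) ∘L ((Pi * Cc) ∘L D) =
              ((a - (Q₀ + Q₀)) * (Pi * Cc)) ∘L D := by
            ext x; simp [ContinuousLinearMap.mul_apply]
          have hB : (-(Cc ∘L D)) ∘L (D' ∘L ((Pi * (a - (Q₀ + Q₀))) ∘L D)) =
              (-(Cc * (Pi * (a - (Q₀ + Q₀))))) ∘L D := by
            ext x; simp [ContinuousLinearMap.mul_apply, hD2']
          rw [hA, hB, ← add_comp, ← sub_eq_add_neg, I2, zero_comp]
        have e21 : (-(D' ∘L Cc)) ∘L (Pi * a) + a' ∘L (D' ∘L (Pi * Cc)) = 0 := by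
          have hA : (-(D' ∘L Cc)) ∘L (Pi * a) = D' ∘L (-(Cc * (Pi * a))) := by
            ext x; simp [ContinuousLinearMap.mul_apply]
          have hB : a' ∘L (D' ∘L (Pi * Cc)) = D' ∘L (a * (Pi * Cc)) := by
            ext x; simp [ContinuousLinearMap.mul_apply, haapp, ha'app, map_smul,
              smul_sub, smul_add]
          rw [hA, hB, ← comp_add]
          have h9 : -(Cc * (Pi * a)) + a * (Pi * Cc) = 0 := by rw [neg_add_eq_sub, I3]
          rw [h9, comp_zero]
        have e22 : (-(D' ∘L Cc)) ∘L ((Pi * Cc) ∘L D) +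
            a' ∘L (D' ∘L ((Pi * (a - (Q₀ + Q₀))) ∘L D)) = 1 := by
          have hA : (-(D' ∘L Cc)) ∘L ((Pi * Cc) ∘L D) =
              D' ∘L ((-(Cc * (Pi * Cc))) ∘L D) := by
            ext x; simp [ContinuousLinearMap.mul_apply]
          have hB : a' ∘L (D' ∘L ((Pi * (a - (Q₀ + Q₀))) ∘L D)) =
              D' ∘L ((a * (Pi * (a - (Q₀ + Q₀)))) ∘L D) := by
            ext x; simp [ContinuousLinearMap.mul_apply, haapp, ha'app, map_smul,
              smul_sub, smul_add]
          rw [hA, hB, ← comp_add, ← add_comp]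
          have h9 : -(Cc * (Pi * Cc)) + a * (Pi * (a - (Q₀ + Q₀))) = 1 := by
            rw [neg_add_eq_sub, I4]
          rw [h9, show ((1 : K →L[ℂ] K) ∘L D) = D from by ext x; simp, hD1]
          exact (ContinuousLinearMap.one_def).symm
        rw [e11, e12, e21, e22]; exact blk_one
      · rw [ContinuousLinearMap.mul_def, hVblk, blk_comp_blk]
        have e11 : (Pi * a) ∘L (a - (Q₀ + Q₀)) + ((Pi * Cc) ∘L D) ∘L (-(D' ∘L Cc)) = 1 := by
          have hB : ((Pi * Cc) ∘L D) ∘L (-(D' ∘L Cc)) = -((Pi * Cc) * Cc) := by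
            ext x; simp [ContinuousLinearMap.mul_apply, hD2']
          rw [hB, ← sub_eq_add_neg]; exact J1
        have e12 : (Pi * a) ∘L (-(Cc ∘L D)) + ((Pi * Cc) ∘L D) ∘L a' = 0 := by
          have hA : (Pi * a) ∘L (-(Cc ∘L D)) = (-((Pi * a) * Cc)) ∘L D := by
            ext x; simp [ContinuousLinearMap.mul_apply]
          have hB : ((Pi * Cc) ∘L D) ∘L a' = ((Pi * Cc) * a) ∘L D := by
            ext x; simp [ContinuousLinearMap.mul_apply, haapp, ha'app, map_smul,
              smul_sub, smul_add]
          rw [hA, hB, ← add_comp, J2, zero_comp]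
        have e21 : (D' ∘L (Pi * Cc)) ∘L (a - (Q₀ + Q₀)) +
            (D' ∘L ((Pi * (a - (Q₀ + Q₀))) ∘L D)) ∘L (-(D' ∘L Cc)) = 0 := by
          have hA : (D' ∘L (Pi * Cc)) ∘L (a - (Q₀ + Q₀)) =
              D' ∘L ((Pi * Cc) * (a - (Q₀ + Q₀))) := by
            ext x; simp [ContinuousLinearMap.mul_apply]
          have hB : (D' ∘L ((Pi * (a - (Q₀ + Q₀))) ∘L D)) ∘L (-(D' ∘L Cc)) =
              D' ∘L (-((Pi * (a - (Q₀ + Q₀))) * Cc)) := by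
            ext x; simp [ContinuousLinearMap.mul_apply, hD2']
          rw [hA, hB, ← comp_add]
          have h9 : (Pi * Cc) * (a - (Q₀ + Q₀)) + -((Pi * (a - (Q₀ + Q₀))) * Cc) = 0 := by
            rw [← sub_eq_add_neg, J3]
          rw [h9, comp_zero]
        have e22 : (D' ∘L (Pi * Cc)) ∘L (-(Cc ∘L D)) +
            (D' ∘L ((Pi * (a - (Q₀ + Q₀))) ∘L D)) ∘L a' = 1 := by
          have hA : (D' ∘L (Pi * Cc)) ∘L (-(Cc ∘L D)) =
              D' ∘L ((-((Pi * Cc) * Cc)) ∘L D) := by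
            ext x; simp [ContinuousLinearMap.mul_apply]
          have hB : (D' ∘L ((Pi * (a - (Q₀ + Q₀))) ∘L D)) ∘L a' =
              D' ∘L (((Pi * (a - (Q₀ + Q₀))) * a) ∘L D) := by
            ext x; simp [ContinuousLinearMap.mul_apply, haapp, ha'app, map_smul,
              smul_sub, smul_add]
          rw [hA, hB, ← comp_add, ← add_comp, J4,
            show ((1 : K →L[ℂ] K) ∘L D) = D from by ext x; simp, hD1]
          exact (ContinuousLinearMap.one_def).symm
        rw [e11, e12, e21, e22]; exact blk_one
    have dir2 : IsUnit (algebraMap ℂ ((K × K') →L[ℂ] K × K') z - f) → IsUnit P := by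
      intro hV
      have hVN : (algebraMap ℂ ((K × K') →L[ℂ] K × K') z - f) * ↑hV.unit⁻¹ = 1 :=
        hV.mul_val_inv
      have hNV : (↑hV.unit⁻¹ : (K × K') →L[ℂ] K × K') *
          (algebraMap ℂ ((K × K') →L[ℂ] K × K') z - f) = 1 := hV.val_inv_mul
      set N : (K × K') →L[ℂ] K × K' := ↑hV.unit⁻¹ with hNdef
      rw [hVblk] at hVN hNV
      obtain ⟨n11, n12, n21, n22, hNblk⟩ :
          ∃ (n11 : K →L[ℂ] K) (n12 : K' →L[ℂ] K) (n21 : K →L[ℂ] K') (n22 : K' →L[ℂ] K'),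
            N = blk n11 n12 n21 n22 := by
        refine ⟨fst ℂ K K' ∘L (N ∘L inl ℂ K K'), fst ℂ K K' ∘L (N ∘L inr ℂ K K'),
          snd ℂ K K' ∘L (N ∘L inl ℂ K K'), snd ℂ K K' ∘L (N ∘L inr ℂ K K'), ?_⟩
        apply ContinuousLinearMap.ext; intro v
        have hv : (v.1, (0 : K')) + ((0 : K), v.2) = v := by
          apply Prod.ext <;> simp
        apply Prod.ext
        · conv_lhs => rw [← hv]
          rw [map_add]
          simp
        · conv_lhs => rw [← hv]
          rw [map_add]
          simp
      rw [ContinuousLinearMap.mul_def, hNblk, blk_comp_blk, ← blk_one] at hVN hNV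
      obtain ⟨E1, -, E2, E4⟩ := blk_injective hVN
      obtain ⟨E5, E6, -, E8⟩ := blk_injective hNV
      by_cases hz : z = 0
      · -- z = 0 : Cc is invertible, P = -(Cc * Cc)
        have ha0 : a = 0 := by rw [hadef, hz, map_zero]
        have ha'0 : a' = 0 := by rw [ha'def, hz, map_zero]
        have hE4' : (-(D' ∘L Cc)) ∘L n12 = 1 := by
          rw [ha'0, zero_comp, add_zero] at E4; exact E4
        have hE8' : n21 ∘L (-(Cc ∘L D)) = 1 := by
          rw [ha'0, comp_zero, add_zero] at E8; exact E8
        have hrc : Cc * (-(n12 ∘L D')) = 1 := by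
          ext x
          have h := congrArg D (DFunLike.congr_fun hE4' (D' x))
          simp only [ContinuousLinearMap.comp_apply, ContinuousLinearMap.neg_apply,
            ContinuousLinearMap.one_apply, map_neg, hD2'] at h
          simpa [ContinuousLinearMap.mul_apply, map_neg] using h
        have hlc : (-(D ∘L n21)) * Cc = 1 := by
          ext x
          have h := DFunLike.congr_fun hE8' (D' x)
          simp only [ContinuousLinearMap.comp_apply, ContinuousLinearMap.neg_apply,
            ContinuousLinearMap.one_apply, map_neg, hD2'] at h
          have h2 := congrArg D h
          rw [hD2'] at h2
          simpa [ContinuousLinearMap.mul_apply, map_neg] using h2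
        have hCcU : IsUnit Cc := by
          have hrl : -(D ∘L n21) = -(n12 ∘L D') := by
            rw [← mul_one (-(D ∘L n21)), ← hrc, ← mul_assoc, hlc, one_mul]
          exact ⟨⟨Cc, -(n12 ∘L D'), hrc, by rw [← hrl, hlc]⟩, rfl⟩
        have hPneg : P = -(Cc * Cc) := by
          rw [hPdef, hCc2, ha0]; simp
        rw [hPneg]
        exact (hCcU.mul hCcU).neg
      · -- z ≠ 0 : P * n11 = a = n11 * P
        have hE1' : (a - (Q₀ + Q₀)) * n11 = 1 + (Cc ∘L D) ∘L n21 := by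
          rw [neg_comp] at E1
          rw [ContinuousLinearMap.mul_def, ← E1]; abel
        have hE2' : a' ∘L n21 = (D' ∘L Cc) ∘L n11 := by
          rw [neg_comp] at E2
          have h := congrArg (fun T => T + (D' ∘L Cc) ∘L n11) E2
          simpa using h
        have hE5' : n11 * (a - (Q₀ + Q₀)) = 1 + n12 ∘L (D' ∘L Cc) := by
          rw [comp_neg] at E5
          rw [ContinuousLinearMap.mul_def, ← E5]; abel
        have hE6' : n12 ∘L a' = n11 ∘L (Cc ∘L D) := by
          rw [comp_neg] at E6
          have h := congrArg (fun T => T + n11 ∘L (Cc ∘L D)) E6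
          simpa using h
        have hsw1 : a * ((Cc ∘L D) ∘L n21) = (Cc ∘L D) ∘L (a' ∘L n21) := by
          ext x
          simp [ContinuousLinearMap.mul_apply, haapp, ha'app, map_smul]
        have hcol1 : (Cc ∘L D) ∘L ((D' ∘L Cc) ∘L n11) = (Cc * Cc) * n11 := by
          ext x; simp [ContinuousLinearMap.mul_apply, hD2']
        have hPn11 : P * n11 = a := by
          have h7 : a * ((a - (Q₀ + Q₀)) * n11) = a + (Cc * Cc) * n11 := by
            rw [hE1', mul_add, mul_one]
            congr 1
            rw [show a * ((Cc ∘L D) ∘L n21) = (Cc ∘L D) ∘L (a' ∘L n21) from hsw1, hE2', hcol1]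
          calc P * n11 = (a * (a - (Q₀ + Q₀)) - Cc * Cc) * n11 := by rw [detA]
          _ = a * ((a - (Q₀ + Q₀)) * n11) - (Cc * Cc) * n11 := by
              rw [sub_mul, mul_assoc]
          _ = a := by rw [h7]; abel
        have hsw2 : (D' ∘L Cc) ∘L a = a' ∘L (D' ∘L Cc) := by
          ext x; simp [ContinuousLinearMap.mul_apply, haapp, ha'app, map_smul]
        have hcol2 : (n11 ∘L (Cc ∘L D)) ∘L (D' ∘L Cc) = n11 * (Cc * Cc) := by
          ext x; simp [ContinuousLinearMap.mul_apply, hD2']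
        have hn11P : n11 * P = a := by
          have h7 : (n11 * (a - (Q₀ + Q₀))) * a = a + n11 * (Cc * Cc) := by
            rw [hE5', add_mul, one_mul]
            congr 1
            calc (n12 ∘L (D' ∘L Cc)) ∘L a = n12 ∘L ((D' ∘L Cc) ∘L a) := by
                  rw [ContinuousLinearMap.comp_assoc]
            _ = (n12 ∘L a') ∘L (D' ∘L Cc) := by rw [hsw2, ContinuousLinearMap.comp_assoc]
            _ = (n11 ∘L (Cc ∘L D)) ∘L (D' ∘L Cc) := by rw [hE6']
            _ = n11 * (Cc * Cc) := hcol2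
          calc n11 * P = n11 * ((a - (Q₀ + Q₀)) * a - Cc * Cc) := by rw [detB]
          _ = (n11 * (a - (Q₀ + Q₀))) * a - n11 * (Cc * Cc) := by
              rw [mul_sub, ← mul_assoc]
          _ = a := by rw [h7]; abel
        refine ⟨⟨P, (z⁻¹ : ℂ) • n11, ?_, ?_⟩, rfl⟩
        · rw [mul_smul_comm, hPn11, hadef, Algebra.algebraMap_eq_smul_one, smul_smul,
            inv_mul_cancel₀ hz, one_smul]
        · rw [smul_mul_assoc, hn11P, hadef, Algebra.algebraMap_eq_smul_one, smul_smul,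
            inv_mul_cancel₀ hz, one_smul]
    constructor
    · intro hV
      have hP := dir2 hV
      rw [← hXY] at hP
      exact hCommXY.isUnit_mul_iff.mp hP
    · rintro ⟨hXu, hYu⟩
      exact dir1 (hXY ▸ (hCommXY.isUnit_mul_iff.mpr ⟨hXu, hYu⟩))
  -- Part 1
  have part1 : spectrum ℂ W = spectrum ℂ (Q₀ + R) ∪ spectrum ℂ (Q₀ - R) := by
    rw [hsWf]
    ext z
    simp only [Set.mem_union, spectrum.mem_iff]
    rw [← not_and_or]
    exact not_congr (hunit z)
  refine ⟨part1, ?_⟩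
  rw [part1]
  have hsaR : IsSelfAdjoint R := IsSelfAdjoint.of_nonneg (CFC.sqrt_nonneg Q₀)
  have hplus : Q₀ + R = cfc (fun x : ℝ => x + Real.sqrt x) Q₀ := by
    have h := cfc_add (a := Q₀) (fun x : ℝ => x) Real.sqrt (by fun_prop)
      (by exact Real.continuous_sqrt.continuousOn)
    rw [cfc_id' ℝ Q₀, ← hRcfc] at h
    exact h.symm
  have hminus : Q₀ - R = cfc (fun x : ℝ => x - Real.sqrt x) Q₀ := by
    have h := cfc_sub (a := Q₀) (fun x : ℝ => x) Real.sqrt (by fun_prop)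
      (by exact Real.continuous_sqrt.continuousOn)
    rw [cfc_id' ℝ Q₀, ← hRcfc] at h
    exact h.symm
  have hmapP : spectrum ℝ (Q₀ + R) = (fun x : ℝ => x + Real.sqrt x) '' spectrum ℝ Q₀ := by
    rw [hplus]
    exact cfc_map_spectrum _ Q₀ hsa (by exact (continuous_id.add Real.continuous_sqrt).continuousOn)
  have hmapM : spectrum ℝ (Q₀ - R) = (fun x : ℝ => x - Real.sqrt x) '' spectrum ℝ Q₀ := by
    rw [hminus]
    exact cfc_map_spectrum _ Q₀ hsa (by exact (continuous_id.sub Real.continuous_sqrt).continuousOn)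
  have himg : ∀ (T : K →L[ℂ] K), IsSelfAdjoint T →
      spectrum ℂ T = (fun r : ℝ => (r : ℂ)) '' spectrum ℝ T := fun T hT => by
    have h := hT.spectrumRestricts.algebraMap_image
    rw [← h]
    congr 1
  have hQiff : ∀ l : ℝ, (l : ℂ) ∈ spectrum ℂ Q₀ ↔ l ∈ spectrum ℝ Q₀ := fun l => by
    rw [himg _ hsa]
    constructor
    · rintro ⟨l', hl', heq⟩
      rwa [show l' = l from Complex.ofReal_inj.mp heq] at hl'
    · intro hl; exact ⟨l, hl, rfl⟩
  ext z
  simp only [Set.mem_union, Set.mem_setOf_eq]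
  rw [himg _ (hsa.add hsaR), himg _ (hsa.sub hsaR), hmapP, hmapM]
  simp only [Set.mem_image]
  constructor
  · rintro (⟨w, ⟨l, hl, rfl⟩, rfl⟩ | ⟨w, ⟨l, hl, rfl⟩, rfl⟩)
    · exact ⟨l, (hQiff l).mpr hl, Or.inl rfl⟩
    · exact ⟨l, (hQiff l).mpr hl, Or.inr rfl⟩
  · rintro ⟨l, hl, (rfl | rfl)⟩
    · exact Or.inl ⟨_, ⟨l, (hQiff l).mp hl, rfl⟩, rfl⟩
    · exact Or.inr ⟨_, ⟨l, (hQiff l).mp hl, rfl⟩, rfl⟩
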